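/- (Theorem 2, part 1: spinor transformation of the first equation.) Let D, D* ⊆ ℂ be open, let z : D* → D be holomorphic on D* with z'(ζ) ≠ 0 for all ζ ∈ D*, and let s : D* → ℂ be a holomorphic branch of the square root of z', i.e. s is holomorphic on D* with s(ζ)² = z'(ζ) for all ζ ∈ D*. Let u : ℂ → ℂ and let ψ be real-differentiable on D with ∂_z̄ ψ = u·conj(ψ) on D. Define u*(ζ) = u(z(ζ))·|z'(ζ)| and ψ*(ζ) = ψ(z(ζ))·s(ζ) for ζ ∈ D*. Then ∂_ζ̄ ψ* = u*·conj(ψ*) on D*. -/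

import Mathlib

open Complex

/-- The Wirtinger derivative ∂_z̄ f(z) = (1/2)((fderiv ℝ f z) 1 + i·((fderiv ℝ f z) i)). -/
noncomputable def dzbar (f : ℂ → ℂ) (z : ℂ) : ℂ :=
  (1 / 2 : ℂ) * ((fderiv ℝ f z) 1 + Complex.I * (fderiv ℝ f z) Complex.I)

/-- The Wirtinger derivative ∂_z f(z) = (1/2)((fderiv ℝ f z) 1 − i·((fderiv ℝ f z) i)). -/
noncomputable def dz (f : ℂ → ℂ) (z : ℂ) : ℂ :=
  (1 / 2 : ℂ) * ((fderiv ℝ f z) 1 - Complex.I * (fderiv ℝ f z) Complex.I)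

/-- Theorem 2, part 1: if ∂_z̄ ψ = u·conj ψ on D, then
ψ*(ζ) = ψ(z(ζ))·s(ζ) satisfies ∂_ζ̄ ψ* = u*·conj ψ* with u*(ζ) = u(z(ζ))·|z'(ζ)|. -/
theorem statement8 (D Dstar : Set ℂ) (hD : IsOpen D) (hDstar : IsOpen Dstar)
    (z z' s : ℂ → ℂ) (hmaps : Set.MapsTo z Dstar D)
    (hz : ∀ ζ ∈ Dstar, HasDerivAt z (z' ζ) ζ)
    (hz' : ∀ ζ ∈ Dstar, z' ζ ≠ 0)
    (hs : ∀ ζ ∈ Dstar, DifferentiableAt ℂ s ζ)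
    (hs2 : ∀ ζ ∈ Dstar, s ζ ^ 2 = z' ζ)
    (u ψ : ℂ → ℂ)
    (hψ : ∀ w ∈ D, DifferentiableAt ℝ ψ w)
    (heq : ∀ w ∈ D, dzbar ψ w = u w * (starRingEnd ℂ) (ψ w)) :
    ∀ ζ ∈ Dstar,
      dzbar (fun ξ => ψ (z ξ) * s ξ) ζ
        = (u (z ζ) * (‖z' ζ‖ : ℂ))
            * (starRingEnd ℂ) (ψ (z ζ) * s ζ) := by
  intro ζ hζ
  have hw := hmaps hζ
  have hψd := hψ (z ζ) hw
  set A := fderiv ℝ ψ (z ζ) with hA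
  set s' := deriv s ζ with hs'
  have hzF : HasFDerivAt z (((1 : ℂ →L[ℂ] ℂ).smulRight (z' ζ)).restrictScalars ℝ) ζ :=
    ((hz ζ hζ).hasFDerivAt).restrictScalars ℝ
  have hcomp : HasFDerivAt (fun ξ => ψ (z ξ))
      (A.comp (((1 : ℂ →L[ℂ] ℂ).smulRight (z' ζ)).restrictScalars ℝ)) ζ :=
    hψd.hasFDerivAt.comp ζ hzF
  have hsF : HasFDerivAt s (((1 : ℂ →L[ℂ] ℂ).smulRight s').restrictScalars ℝ) ζ :=
    ((hs ζ hζ).hasDerivAt.hasFDerivAt).restrictScalars ℝ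
  have hF := (hcomp.mul hsF).fderiv
  have hAc : ∀ c : ℂ, A c = (c.re : ℂ) * A 1 + (c.im : ℂ) * A I := by
    intro c
    have h1 : A c = A ((c.re : ℝ) • (1:ℂ) + (c.im : ℝ) • I) := by
      congr 1
      simp [Complex.real_smul]
    rw [h1, map_add, map_smul, map_smul]
    simp [Complex.real_smul]
  have key : ∀ c : ℂ, A c + I * A (I * c) = (starRingEnd ℂ) c * (A 1 + I * A I) := by
    intro c
    have hconj : (starRingEnd ℂ) c = (c.re : ℂ) - (c.im : ℂ) * I := by
      apply Complex.ext <;> simp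
    rw [hAc c, hAc (I * c), hconj]
    simp [Complex.mul_re, Complex.mul_im]
    linear_combination ((c.im : ℂ) * A I) * Complex.I_sq
  have e1 : fderiv ℝ (fun ξ => ψ (z ξ) * s ξ) ζ 1 = s ζ * A (z' ζ) + ψ (z ζ) * s' := by
    rw [show (fun ξ => ψ (z ξ) * s ξ) = (fun ξ => ψ (z ξ)) * s from rfl, hF]
    simp [smul_eq_mul]
    ring
  have e2 : fderiv ℝ (fun ξ => ψ (z ξ) * s ξ) ζ I
      = s ζ * A (I * z' ζ) + ψ (z ζ) * (I * s') := by
    rw [show (fun ξ => ψ (z ξ) * s ξ) = (fun ξ => ψ (z ξ)) * s from rfl, hF]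
    simp [smul_eq_mul]
    ring
  have hpsieq := heq (z ζ) hw
  have hdz : A 1 + I * A I = 2 * (u (z ζ) * (starRingEnd ℂ) (ψ (z ζ))) := by
    have h := heq (z ζ) hw
    unfold dzbar at h
    rw [← hA] at h
    linear_combination 2 * h
  have habs : s ζ * (starRingEnd ℂ) (z' ζ)
      = ((‖z' ζ‖) : ℂ) * (starRingEnd ℂ) (s ζ) := by
    rw [← hs2 ζ hζ, map_pow, sq, ← mul_assoc, Complex.mul_conj]
    congr 1
    rw [norm_pow, Complex.sq_norm]
  unfold dzbar
  rw [e1, e2]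
  have expand : (1/2 : ℂ) * ((s ζ * A (z' ζ) + ψ (z ζ) * s')
      + I * (s ζ * A (I * z' ζ) + ψ (z ζ) * (I * s')))
      = (1/2 : ℂ) * s ζ * (A (z' ζ) + I * A (I * z' ζ))
        + (1/2 : ℂ) * ψ (z ζ) * s' * (1 + I * I) := by ring
  rw [expand, key, hdz, map_mul]
  linear_combination (u (z ζ) * (starRingEnd ℂ) (ψ (z ζ))) * habs
    + ((1/2 : ℂ) * ψ (z ζ) * s') * Complex.I_mul_I
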